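/- For every pair of scalars ζ with ζ ∉ {0,1}, the 4-dimensional Lie algebra L_R with brackets [H,E]=E, [H,A]=(1−ζ)A, [H,B]=ζB, [A,B]=E, [E,A]=[E,B]=0 is a Frobenius Lie algebra. -/

import Mathlib

/- STATEMENT 5: For every scalar ζ ∉ {0,1}, the Lie algebra L_R with basis
{H,A,B,E} = {b 0,b 1,b 2,b 3} and brackets [H,E]=E, [H,A]=(1−ζ)A, [H,B]=ζB, [A,B]=E,
[E,A]=[E,B]=0 is Frobenius. -/

theorem stmt5 {K : Type} [Field K] [CharZero K] {L : Type} [LieRing L] [LieAlgebra K L]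
    (ζ : K) (hζ0 : ζ ≠ 0) (hζ1 : ζ ≠ 1) (b : Module.Basis (Fin 4) K L)
    (hHA : ⁅b 0, b 1⁆ = (1 - ζ) • b 1) (hHB : ⁅b 0, b 2⁆ = ζ • b 2)
    (hHE : ⁅b 0, b 3⁆ = b 3) (hAB : ⁅b 1, b 2⁆ = b 3)
    (hEA : ⁅b 3, b 1⁆ = 0) (hEB : ⁅b 3, b 2⁆ = 0) :
    ∃ f : L →ₗ[K] K, ∀ x : L, (∀ y : L, f ⁅x, y⁆ = 0) → x = 0 := by
  refine ⟨b.coord 3, fun x hx => ?_⟩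
  have hEA' : ⁅b 1, b 3⁆ = 0 := by rw [← lie_skew, hEA, neg_zero]
  have hEB' : ⁅b 2, b 3⁆ = 0 := by rw [← lie_skew, hEB, neg_zero]
  have hAH : ⁅b 1, b 0⁆ = -((1 - ζ) • b 1) := by rw [← lie_skew, hHA]
  have hBH : ⁅b 2, b 0⁆ = -(ζ • b 2) := by rw [← lie_skew, hHB]
  have hEH : ⁅b 3, b 0⁆ = -(b 3) := by rw [← lie_skew, hHE]
  have hBA : ⁅b 2, b 1⁆ = -(b 3) := by rw [← lie_skew, hAB]
  have hrep : x = b.repr x 0 • b 0 + b.repr x 1 • b 1 + b.repr x 2 • b 2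
      + b.repr x 3 • b 3 := by
    have := b.sum_repr x
    rw [Fin.sum_univ_four] at this
    exact this.symm
  have hx0 := hx (b 0); have hx1 := hx (b 1); have hx2 := hx (b 2); have hx3 := hx (b 3)
  rw [hrep] at hx0 hx1 hx2 hx3
  simp only [add_lie, smul_lie, lie_self, hHA, hHB, hHE, hAB, hEA, hEB, hEA', hEB',
    hAH, hBH, hEH, hBA, smul_zero, smul_neg, smul_smul, map_add, map_smul, map_neg,
    Module.Basis.coord_apply, Module.Basis.repr_self, zero_add, add_zero, neg_zero,
    Finsupp.smul_apply, Finsupp.add_apply, Finsupp.neg_apply, smul_eq_mul] at hx0 hx1 hx2 hx3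
  simp [Finsupp.single_apply] at hx0 hx1 hx2 hx3
  rw [hrep, hx0, hx1, hx2, hx3]
  simp
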